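/- The closed-form Gaussian divergence Ψ(P,Q) is nonnegative whenever σ_p, σ_q > 1/(2√π), and equals 0 if and only if μ_p = μ_q and σ_p = σ_q. -/
import Mathlib


open Real

/-- Closed-form hyperbolic Gaussian divergence. -/
noncomputable def PsiClosed (μp μq σp σq : ℝ) : ℝ :=
  (1 / (σp * Real.sqrt Real.pi) -
      2 * Real.sqrt 2 *
        (Real.exp (-((μp - μq) ^ 2) / (2 * (σp ^ 2 + σq ^ 2))) /
          Real.sqrt (Real.pi * (σp ^ 2 + σq ^ 2))) +
      1 / (σq * Real.sqrt Real.pi)) /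
    ((1 - 1 / (2 * σp * Real.sqrt Real.pi)) * (1 - 1 / (2 * σq * Real.sqrt Real.pi)))

private lemma aux_le_of_sq (u v : ℝ) (hu : 0 ≤ u) (hv : 0 ≤ v) (h : v ^ 2 ≤ u ^ 2) :
    v ≤ u := by nlinarith

private lemma aux_lt_of_sq (u v : ℝ) (hu : 0 ≤ u) (hv : 0 ≤ v) (h : v ^ 2 < u ^ 2) :
    v < u := by nlinarith

set_option maxHeartbeats 1000000 in
theorem psi_nonneg_and_eq_zero_iff (μp μq σp σq : ℝ)
    (hσp : σp > 1 / (2 * Real.sqrt Real.pi)) (hσq : σq > 1 / (2 * Real.sqrt Real.pi)) :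
    0 ≤ PsiClosed μp μq σp σq ∧
      (PsiClosed μp μq σp σq = 0 ↔ μp = μq ∧ σp = σq) := by
  have hπ : (0:ℝ) < Real.sqrt Real.pi := Real.sqrt_pos.mpr Real.pi_pos
  have hp0 : 0 < σp := lt_trans (by positivity) hσp
  have hq0 : 0 < σq := lt_trans (by positivity) hσq
  -- denominator positivity
  have hdp : 0 < 1 - 1 / (2 * σp * Real.sqrt Real.pi) := by
    have h1 : 1 < σp * (2 * Real.sqrt Real.pi) :=
      (div_lt_iff₀ (by positivity)).mp hσp
    have h2 : 1 / (2 * σp * Real.sqrt Real.pi) < 1 := by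
      rw [div_lt_one (by positivity)]; nlinarith
    linarith
  have hdq : 0 < 1 - 1 / (2 * σq * Real.sqrt Real.pi) := by
    have h1 : 1 < σq * (2 * Real.sqrt Real.pi) :=
      (div_lt_iff₀ (by positivity)).mp hσq
    have h2 : 1 / (2 * σq * Real.sqrt Real.pi) < 1 := by
      rw [div_lt_one (by positivity)]; nlinarith
    linarith
  set s : ℝ := σp ^ 2 + σq ^ 2 with hs
  have hs0 : 0 < s := by positivity
  set E : ℝ := Real.exp (-((μp - μq) ^ 2) / (2 * s)) with hEdef
  have hE0 : 0 < E := Real.exp_pos _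
  have hE1 : E ≤ 1 := by
    rw [hEdef, Real.exp_le_one_iff]
    have : 0 ≤ (μp - μq) ^ 2 / (2 * s) := by positivity
    rw [neg_div]; linarith
  set t : ℝ := Real.sqrt s with htdef
  have ht0 : 0 < t := Real.sqrt_pos.mpr hs0
  have ht2 : t ^ 2 = s := Real.sq_sqrt hs0.le
  set r2 : ℝ := Real.sqrt 2 with hr2def
  have hr20 : 0 < r2 := Real.sqrt_pos.mpr (by norm_num)
  have hr22 : r2 ^ 2 = 2 := Real.sq_sqrt (by norm_num)
  have hsqrtmul : Real.sqrt (Real.pi * s) = Real.sqrt Real.pi * t :=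
    Real.sqrt_mul Real.pi_pos.le s
  have e1 : (2 * r2 * σp * σq) ^ 2 = 8 * (σp * σq) ^ 2 := by
    rw [show (2 * r2 * σp * σq) ^ 2 = 4 * r2 ^ 2 * (σp * σq) ^ 2 by ring, hr22]; ring
  have e2 : ((σp + σq) * t) ^ 2 = (σp + σq) ^ 2 * s := by rw [mul_pow, ht2]
  -- key inequality
  have hkey : 2 * r2 * σp * σq ≤ (σp + σq) * t := by
    apply aux_le_of_sq _ _ (by positivity) (by positivity)
    rw [e1, e2, hs]
    nlinarith [sq_nonneg ((σp - σq) * (σp + σq)), sq_nonneg (σp - σq),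
      mul_pos hp0 hq0]
  -- rewrite Psi as TOP / bottom
  have hPsi : PsiClosed μp μq σp σq =
      ((σp + σq) * t - 2 * r2 * σp * σq * E) / (σp * σq * Real.sqrt Real.pi * t) /
        ((1 - 1 / (2 * σp * Real.sqrt Real.pi)) * (1 - 1 / (2 * σq * Real.sqrt Real.pi))) := by
    unfold PsiClosed
    rw [← hs, ← hEdef, hsqrtmul, ← hr2def]
    congr 1
    field_simp
    ring
  set TOP : ℝ := (σp + σq) * t - 2 * r2 * σp * σq * E with hTOP
  have hTOPnn : 0 ≤ TOP := by
    have h1 : 2 * r2 * σp * σq * E ≤ 2 * r2 * σp * σq * 1 := by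
      apply mul_le_mul_of_nonneg_left hE1 (by positivity)
    rw [hTOP]; nlinarith
  have hTOPpos : ¬(μp = μq ∧ σp = σq) → 0 < TOP := by
    intro hne
    by_cases hμ : μp = μq
    · -- then σp ≠ σq
      have hσ : σp ≠ σq := fun h => hne ⟨hμ, h⟩
      have hE1' : E = 1 := by
        rw [hEdef, hμ]; norm_num
      have hstrict : 2 * r2 * σp * σq < (σp + σq) * t := by
        apply aux_lt_of_sq _ _ (by positivity) (by positivity)
        have hd : 0 < (σp - σq) ^ 2 := by
          have : σp - σq ≠ 0 := sub_ne_zero.mpr hσ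
          positivity
        rw [e1, e2, hs]
        nlinarith [sq_nonneg ((σp - σq) * (σp + σq)), mul_pos hp0 hq0, mul_pos (mul_pos hp0 hq0) hd]
      rw [hTOP, hE1']; nlinarith
    · -- μp ≠ μq, so E < 1
      have hElt : E < 1 := by
        rw [hEdef, Real.exp_lt_one_iff]
        have hd : 0 < (μp - μq) ^ 2 := by
          have : μp - μq ≠ 0 := sub_ne_zero.mpr hμ
          positivity
        have : 0 < (μp - μq) ^ 2 / (2 * s) := by positivity
        rw [neg_div]; linarith
      have h1 : 2 * r2 * σp * σq * E < 2 * r2 * σp * σq * 1 := by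
        apply mul_lt_mul_of_pos_left hElt (by positivity)
      rw [hTOP]; nlinarith
  have hTOPzero : (μp = μq ∧ σp = σq) → TOP = 0 := by
    rintro ⟨hμ, hσ⟩
    have hE1' : E = 1 := by rw [hEdef, hμ]; norm_num
    have ht' : t = r2 * σp := by
      rw [htdef, hs, hσ, hr2def]
      rw [show σq ^ 2 + σq ^ 2 = 2 * σq ^ 2 by ring, Real.sqrt_mul (by norm_num),
        Real.sqrt_sq hq0.le]
    rw [hTOP, hE1', ht', hσ]; ring
  have hbot : 0 < σp * σq * Real.sqrt Real.pi * t := by positivity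
  have hD : 0 < (1 - 1 / (2 * σp * Real.sqrt Real.pi)) * (1 - 1 / (2 * σq * Real.sqrt Real.pi)) :=
    mul_pos hdp hdq
  constructor
  · rw [hPsi]
    exact div_nonneg (div_nonneg hTOPnn hbot.le) hD.le
  · rw [hPsi]
    constructor
    · intro h
      by_contra hne
      have := hTOPpos hne
      have : 0 < TOP / (σp * σq * Real.sqrt Real.pi * t) /
          ((1 - 1 / (2 * σp * Real.sqrt Real.pi)) * (1 - 1 / (2 * σq * Real.sqrt Real.pi))) :=
        div_pos (div_pos this hbot) hD
      linarith [h ▸ this]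
    · intro h
      rw [hTOPzero h]
      simp
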